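/- Let p ≥ 6 be an even integer, m ≥ 3, and let i_1,…,i_m ∈ C_p be colors, not all equal to 0. Then a chain coloring for (i_1,…,i_m) exists if and only if both: (1) i_1+⋯+i_m is even, and (2) for every integer k with 0 ≤ 2k+1 ≤ m and every subset {s_1,…,s_{2k+1}} ⊆ {1,…,m} of cardinality 2k+1 one has 2·(i_{s_1}+⋯+i_{s_{2k+1}}) ≤ k(p−4) + (i_1+⋯+i_m). -/

import Mathlib

/-- Level-`p` colors for even `p`: natural numbers `j` with `j ≤ (p - 4)/2`. -/
def ColorEven (p j : ℕ) : Prop := 2 * j + 4 ≤ p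

/-- `p`-admissibility of a triple of colors for even `p`:
`|b - c| ≤ a ≤ b + c`, `a + b + c` even, and `a + b + c ≤ p - 4`. -/
def AdmEven (p a b c : ℕ) : Prop :=
  b ≤ a + c ∧ c ≤ a + b ∧ a ≤ b + c ∧ Even (a + b + c) ∧ a + b + c + 4 ≤ p

/-- `ChainFrom adm C a l e` : starting from the color `a`, the boundary colors `l`
can be connected by the chain of internal colors `e` (each internal color satisfying `C`),
all consecutive triples being admissible. -/
def ChainFrom (adm : ℕ → ℕ → ℕ → Prop) (C : ℕ → Prop) : ℕ → List ℕ → List ℕ → Prop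
  | a, [x, y], [] => adm a x y
  | a, x :: rest, e :: es => C e ∧ adm a x e ∧ ChainFrom adm C e rest es
  | _, _, _ => False

/-- `IsChainColoring adm C i e` : `e = (e_1, …, e_{m-3})` is a chain coloring for the
boundary tuple `i = (i_1, …, i_m)`, i.e. the triples `(i_1,i_2,e_1), (e_1,i_3,e_2), …,
(e_{m-3}, i_{m-1}, i_m)` are all admissible and each `e_t` is a color. -/
def IsChainColoring (adm : ℕ → ℕ → ℕ → Prop) (C : ℕ → Prop) : List ℕ → List ℕ → Prop
  | i1 :: rest, e => ChainFrom adm C i1 rest e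
  | [], _ => False

/-- A chain coloring for the boundary tuple `i` exists. -/
def HasChain (adm : ℕ → ℕ → ℕ → Prop) (C : ℕ → Prop) (i : List ℕ) : Prop :=
  ∃ e, IsChainColoring adm C i e

namespace Stmt4Aux

lemma chainFrom_cons_cons (adm : ℕ→ℕ→ℕ→Prop) (C : ℕ → Prop) (a x : ℕ) (l : List ℕ)
    (e : ℕ) (es : List ℕ) :
    ChainFrom adm C a (x :: l) (e :: es) = (C e ∧ adm a x e ∧ ChainFrom adm C e l es) := by
  simp [ChainFrom]

lemma chainFrom_nil (adm : ℕ→ℕ→ℕ→Prop) (C : ℕ → Prop) (a : ℕ) (es : List ℕ) :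
    ChainFrom adm C a [] es = False := by
  cases es <;> rfl

lemma chainFrom_single (adm : ℕ→ℕ→ℕ→Prop) (C : ℕ → Prop) (a x : ℕ) (es : List ℕ) :
    ChainFrom adm C a [x] es = False := by
  cases es with
  | nil => rfl
  | cons e es' => rw [chainFrom_cons_cons, chainFrom_nil]; simp

lemma msum_le {s t : Multiset ℕ} (h : s ≤ t) : s.sum ≤ t.sum := by
  obtain ⟨u, rfl⟩ := Multiset.le_iff_exists_add.mp h; simp

lemma le_cons_cases {α : Type*} {a : α} {s t : Multiset α} (h : t ≤ a ::ₘ s) :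
    t ≤ s ∨ ∃ t', t = a ::ₘ t' ∧ t' ≤ s := by
  classical
  by_cases ha : a ∈ t
  · right
    refine ⟨t.erase a, (Multiset.cons_erase ha).symm, ?_⟩
    rw [← Multiset.cons_le_cons_iff a, Multiset.cons_erase ha]; exact h
  · left
    rw [Multiset.le_iff_count] at h ⊢
    intro b
    have hb := h b
    by_cases hba : b = a
    · subst hba; simp [Multiset.count_eq_zero_of_notMem ha]
    · rwa [Multiset.count_cons_of_ne hba] at hb

lemma exists_map_le {α β : Type*} {f : α → β} {s : Multiset α} :
    ∀ {t : Multiset β}, t ≤ s.map f → ∃ u, u ≤ s ∧ u.map f = t := by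
  induction s using Multiset.induction_on with
  | empty =>
    intro t ht
    simp only [Multiset.map_zero, Multiset.le_zero] at ht
    exact ⟨0, le_rfl, by simp [ht]⟩
  | cons a s ih =>
    intro t ht
    rw [Multiset.map_cons] at ht
    rcases le_cons_cases ht with h | ⟨t', rfl, h⟩
    · obtain ⟨u, hu, rfl⟩ := ih h
      exact ⟨u, hu.trans (Multiset.le_cons_self _ _), rfl⟩
    · obtain ⟨u, hu, rfl⟩ := ih h
      exact ⟨a ::ₘ u, Multiset.cons_le_cons _ hu, by simp⟩

lemma twice_sum_le {p : ℕ} {I : Multiset ℕ} (h : ∀ x ∈ I, 2 * x + 4 ≤ p) :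
    2 * I.sum ≤ Multiset.card I * (p - 4) := by
  induction I using Multiset.induction_on with
  | empty => simp
  | cons a s ih =>
    have ha := h a (Multiset.mem_cons_self a s)
    have hs := ih (fun x hx => h x (Multiset.mem_cons_of_mem hx))
    simp only [Multiset.sum_cons, Multiset.card_cons]
    have : (Multiset.card s + 1) * (p - 4) = Multiset.card s * (p - 4) + (p - 4) := by ring
    omega

/-- The inequality condition for the boundary list `l`. -/
def Cond (p : ℕ) (l : List ℕ) : Prop :=
  Even l.sum ∧ ∀ (k : ℕ) (t : Multiset ℕ), t ≤ (l : Multiset ℕ) →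
    Multiset.card t = 2 * k + 1 → 2 * t.sum ≤ k * (p - 4) + l.sum

lemma cond_three {p : ℕ} (hp : 6 ≤ p) {a b c : ℕ} :
    Cond p [a, b, c] ↔ AdmEven p a b c := by
  have hsum : ([a,b,c] : List ℕ).sum = a + b + c := by simp; ring
  constructor
  · rintro ⟨hev, hineq⟩
    have hsa : ({a} : Multiset ℕ) ≤ (([a,b,c] : List ℕ) : Multiset ℕ) :=
      Multiset.singleton_le.mpr (by simp)
    have hsb : ({b} : Multiset ℕ) ≤ (([a,b,c] : List ℕ) : Multiset ℕ) :=
      Multiset.singleton_le.mpr (by simp)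
    have hsc : ({c} : Multiset ℕ) ≤ (([a,b,c] : List ℕ) : Multiset ℕ) :=
      Multiset.singleton_le.mpr (by simp)
    have ha := hineq 0 {a} hsa (by simp)
    have hb := hineq 0 {b} hsb (by simp)
    have hc := hineq 0 {c} hsc (by simp)
    have hall := hineq 1 (([a,b,c] : List ℕ) : Multiset ℕ) le_rfl (by simp)
    simp only [Multiset.sum_singleton, hsum] at ha hb hc hall
    have hcoe : ((([a,b,c] : List ℕ) : Multiset ℕ)).sum = a + b + c := by simp; ring
    rw [hcoe] at hall
    rw [hsum, Nat.even_iff] at hev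
    refine ⟨by omega, by omega, by omega, by rw [Nat.even_iff]; omega, by omega⟩
  · rintro ⟨h1, h2, h3, h4, h5⟩
    constructor
    · rw [hsum]; exact h4
    · intro k t ht hcard
      have hct := Multiset.card_le_card ht
      have hc3 : Multiset.card ((([a,b,c] : List ℕ)) : Multiset ℕ) = 3 := by simp
      rw [hc3] at hct
      rw [hsum]
      have hk1 : k ≤ 1 := by omega
      interval_cases k
      · -- card t = 1
        obtain ⟨x, rfl⟩ := Multiset.card_eq_one.mp hcard
        have hx : x ∈ (([a,b,c] : List ℕ) : Multiset ℕ) :=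
          Multiset.mem_of_le ht (Multiset.mem_singleton_self x)
        simp only [Multiset.mem_coe, List.mem_cons, List.mem_singleton,
          List.not_mem_nil, or_false] at hx
        simp only [Multiset.sum_singleton]
        rcases hx with rfl | rfl | rfl <;> omega
      · -- card t = 3
        have heq := Multiset.eq_of_le_of_card_le ht (by rw [hc3, hcard])
        rw [heq]
        have hcoe : ((([a,b,c] : List ℕ) : Multiset ℕ)).sum = a + b + c := by simp; ring
        rw [hcoe]
        omega

lemma cond_step_forward {p : ℕ} {i1 i2 e : ℕ} {rest : List ℕ}
    (hadm : AdmEven p i1 i2 e) (hC : Cond p (e :: rest)) : Cond p (i1 :: i2 :: rest) := by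
  obtain ⟨ha1, ha2, ha3, ha4, ha5⟩ := hadm
  obtain ⟨hev, hineq⟩ := hC
  rw [List.sum_cons] at hev
  rw [Nat.even_iff] at hev ha4
  constructor
  · simp only [List.sum_cons]
    rw [Nat.even_iff]; omega
  · intro k t ht hcard
    have ht' : t ≤ i1 ::ₘ i2 ::ₘ (rest : Multiset ℕ) := ht
    simp only [List.sum_cons]
    rcases le_cons_cases ht' with h1 | ⟨t1, rfl, h1⟩
    · rcases le_cons_cases h1 with h2 | ⟨t2, rfl, h2⟩
      · have := hineq k t (h2.trans (Multiset.le_cons_self _ _)) hcard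
        simp only [List.sum_cons] at this
        omega
      · have hc2 : Multiset.card t2 = 2 * k := by
          simp only [Multiset.card_cons] at hcard; omega
        have := hineq k (e ::ₘ t2) (Multiset.cons_le_cons _ h2)
          (by simp only [Multiset.card_cons, hc2])
        simp only [List.sum_cons, Multiset.sum_cons] at this ⊢
        omega
    · rcases le_cons_cases h1 with h2 | ⟨t2, rfl, h2⟩
      · have hc1 : Multiset.card t1 = 2 * k := by
          simp only [Multiset.card_cons] at hcard; omega
        have := hineq k (e ::ₘ t1) (Multiset.cons_le_cons _ h2)
          (by simp only [Multiset.card_cons, hc1])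
        simp only [List.sum_cons, Multiset.sum_cons] at this ⊢
        omega
      · have hc2 : Multiset.card t2 + 2 = 2 * k + 1 := by
          simp only [Multiset.card_cons] at hcard; omega
        obtain ⟨k', rfl⟩ : ∃ k', k = k' + 1 := ⟨k - 1, by omega⟩
        have := hineq k' t2 (h2.trans (Multiset.le_cons_self _ _)) (by omega)
        simp only [List.sum_cons, Multiset.sum_cons] at this ⊢
        have hmul : (k' + 1) * (p - 4) = k' * (p - 4) + (p - 4) := by ring
        omega

/-- Predicate describing candidate lower bounds for the new internal color. -/
def LBQ (q R i1 i2 : ℕ) (rest : List ℕ) (v : ℕ) : Prop :=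
  (i1 ≤ i2 ∧ v + i1 = i2) ∨ (i2 ≤ i1 ∧ v + i2 = i1) ∨
    ∃ (k : ℕ) (t : Multiset ℕ), t ≤ (rest : Multiset ℕ) ∧ Multiset.card t = 2 * k + 1 ∧
      2 * t.sum = v + k * q + R
lemma cond_step_backward {p : ℕ} (hp : 6 ≤ p) (hpe : Even p) {i1 i2 : ℕ} {rest : List ℕ}
    (h1 : ColorEven p i1) (h2 : ColorEven p i2) (hrest : ∀ x ∈ rest, ColorEven p x)
    (hC : Cond p (i1 :: i2 :: rest)) :
    ∃ e, ColorEven p e ∧ AdmEven p i1 i2 e ∧ Cond p (e :: rest) := by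
  classical
  obtain ⟨hev, hineq⟩ := hC
  unfold ColorEven at h1 h2
  set R := rest.sum with hRdef
  have hq4 : p - 4 + 4 = p := by omega
  have hqe : (p - 4) % 2 = 0 := by rw [Nat.even_iff] at hpe; omega
  have hkq : ∀ k : ℕ, (k * (p - 4)) % 2 = 0 := fun k =>
    Nat.even_iff.mp ((Nat.even_iff.mpr hqe).mul_left k)
  have hTe : (i1 + i2 + R) % 2 = 0 := by
    simp only [List.sum_cons] at hev
    rw [Nat.even_iff] at hev; omega
  set e := Nat.findGreatest (LBQ (p - 4) R i1 i2 rest) (i1 + i2) with hedef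
  have hQ1 : i1 ≤ i2 → LBQ (p - 4) R i1 i2 rest (i2 - i1) := by
    intro h; unfold LBQ; exact Or.inl ⟨h, by omega⟩
  have hQ2 : i2 ≤ i1 → LBQ (p - 4) R i1 i2 rest (i1 - i2) := by
    intro h; unfold LBQ; exact Or.inr (Or.inl ⟨h, by omega⟩)
  have hQe : LBQ (p - 4) R i1 i2 rest e := by
    rcases le_total i1 i2 with h | h
    · exact Nat.findGreatest_spec (m := i2 - i1) (by omega) (hQ1 h)
    · exact Nat.findGreatest_spec (m := i1 - i2) (by omega) (hQ2 h)
  have hLB1 : i1 ≤ i2 + e := by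
    rcases le_total i1 i2 with h | h
    · omega
    · have := Nat.le_findGreatest (n := i1 + i2) (m := i1 - i2) (by omega) (hQ2 h); omega
  have hLB2 : i2 ≤ i1 + e := by
    rcases le_total i2 i1 with h | h
    · omega
    · have := Nat.le_findGreatest (n := i1 + i2) (m := i2 - i1) (by omega) (hQ1 h); omega
  have hUB1 : e ≤ i1 + i2 := Nat.findGreatest_le _
  have hfullsum : (i1 :: i2 :: rest).sum = i1 + i2 + R := by
    simp only [List.sum_cons]; omega
  have hfull_le : ∀ (k : ℕ) (t : Multiset ℕ), t ≤ (rest : Multiset ℕ) →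
      Multiset.card t = 2 * k + 1 → 2 * t.sum ≤ k * (p - 4) + (i1 + i2 + R) := by
    intro k t ht hc
    have := hineq k t
      ((ht.trans (Multiset.le_cons_self _ i2)).trans (Multiset.le_cons_self _ i1)) hc
    rwa [hfullsum] at this
  unfold LBQ at hQe
  have hUB2 : e + i1 + i2 ≤ p - 4 := by
    rcases hQe with ⟨h, hv⟩ | ⟨h, hv⟩ | ⟨k, t, ht, hcard, hsum⟩
    · omega
    · omega
    · have hle : (i1 ::ₘ i2 ::ₘ t) ≤ ((i1 :: i2 :: rest : List ℕ) : Multiset ℕ) :=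
        Multiset.cons_le_cons _ (Multiset.cons_le_cons _ ht)
      have := hineq (k + 1) (i1 ::ₘ i2 ::ₘ t) hle
        (by simp only [Multiset.card_cons, hcard]; omega)
      rw [hfullsum] at this
      simp only [Multiset.sum_cons] at this
      have hmul : (k + 1) * (p - 4) = k * (p - 4) + (p - 4) := by ring
      omega
  have hUB3 : ∀ (k' : ℕ) (t0 : Multiset ℕ), t0 ≤ (rest : Multiset ℕ) →
      Multiset.card t0 = 2 * k' → e + 2 * t0.sum ≤ k' * (p - 4) + R := by
    intro k' t0 ht0 hc0
    rcases hQe with ⟨h, hv⟩ | ⟨h, hv⟩ | ⟨k, t, ht, hcard, hsum⟩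
    · -- e + i1 = i2
      have hle : (i2 ::ₘ t0) ≤ ((i1 :: i2 :: rest : List ℕ) : Multiset ℕ) :=
        (Multiset.cons_le_cons i2 ht0).trans (Multiset.le_cons_self _ i1)
      have := hineq k' (i2 ::ₘ t0) hle (by simp only [Multiset.card_cons, hc0])
      rw [hfullsum] at this
      simp only [Multiset.sum_cons] at this
      omega
    · -- e + i2 = i1
      have hle : (i1 ::ₘ t0) ≤ ((i1 :: i2 :: rest : List ℕ) : Multiset ℕ) :=
        Multiset.cons_le_cons i1 (ht0.trans (Multiset.le_cons_self _ i2))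
      have := hineq k' (i1 ::ₘ t0) hle (by simp only [Multiset.card_cons, hc0])
      rw [hfullsum] at this
      simp only [Multiset.sum_cons] at this
      omega
    · -- e comes from an odd submultiset t of rest
      have hIc : Multiset.card (t ∩ t0) ≤ k + k' := by
        have a1 := Multiset.card_le_card (Multiset.inter_le_left : t ∩ t0 ≤ t)
        have a2 := Multiset.card_le_card (Multiset.inter_le_right : t ∩ t0 ≤ t0)
        omega
      have hIs : 2 * (t ∩ t0).sum ≤ Multiset.card (t ∩ t0) * (p - 4) := by
        refine twice_sum_le (fun x hx => hrest x ?_)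
        have hx' : x ∈ (rest : Multiset ℕ) :=
          Multiset.mem_of_le ((Multiset.inter_le_left : t ∩ t0 ≤ t).trans ht) hx
        simpa using hx'
      have hU : (t ∪ t0).sum ≤ R := by
        have := msum_le (Multiset.union_le ht ht0)
        simpa [hRdef] using this
      have hsplit : (t ∪ t0).sum + (t ∩ t0).sum = t.sum + t0.sum := by
        have := congrArg Multiset.sum (Multiset.union_add_inter t t0)
        simpa using this
      have hIk : Multiset.card (t ∩ t0) * (p - 4) ≤ (k + k') * (p - 4) :=
        Nat.mul_le_mul_right _ hIc
      have hmul : (k + k') * (p - 4) = k * (p - 4) + k' * (p - 4) := by ring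
      omega
  have hpar : (e + i1 + i2) % 2 = 0 := by
    rcases hQe with ⟨h, hv⟩ | ⟨h, hv⟩ | ⟨k, t, ht, hcard, hsum⟩
    · omega
    · omega
    · have := hkq k; omega
  refine ⟨e, ?_, ⟨by omega, by omega, by omega, by rw [Nat.even_iff]; omega, by omega⟩, ?_, ?_⟩
  · unfold ColorEven; omega
  · simp only [List.sum_cons]
    rw [Nat.even_iff]; omega
  · intro k t' ht' hcard'
    have ht'' : t' ≤ e ::ₘ (rest : Multiset ℕ) := ht'
    simp only [List.sum_cons]
    rcases le_cons_cases ht'' with hcase | ⟨t0, rfl, ht0⟩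
    · by_cases hbig : 2 * t'.sum ≤ k * (p - 4) + R
      · omega
      · push_neg at hbig
        have hvQ : LBQ (p - 4) R i1 i2 rest (2 * t'.sum - (k * (p - 4) + R)) := by
          unfold LBQ
          exact Or.inr (Or.inr ⟨k, t', hcase, hcard', by omega⟩)
        have hvle : 2 * t'.sum - (k * (p - 4) + R) ≤ i1 + i2 := by
          have := hfull_le k t' hcase hcard'
          omega
        have := Nat.le_findGreatest hvle hvQ
        omega
    · have hc0 : Multiset.card t0 = 2 * k := by
        simp only [Multiset.card_cons] at hcard'; omega
      have := hUB3 k t0 ht0 hc0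
      simp only [Multiset.sum_cons]
      omega

lemma hasChain_three {adm : ℕ→ℕ→ℕ→Prop} {C : ℕ → Prop} {a b c : ℕ} :
    HasChain adm C [a, b, c] ↔ adm a b c := by
  constructor
  · rintro ⟨es, hes⟩
    match es with
    | [] => exact hes
    | e :: es' =>
      have hes' : ChainFrom adm C a (b :: [c]) (e :: es') := hes
      rw [chainFrom_cons_cons, chainFrom_single] at hes'
      exact hes'.2.2.elim
  · intro h
    exact ⟨[], h⟩

lemma hasChain_cons_cons {adm : ℕ→ℕ→ℕ→Prop} {C : ℕ → Prop} {i1 i2 : ℕ} {rest : List ℕ}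
    (hr : 2 ≤ rest.length) :
    HasChain adm C (i1 :: i2 :: rest) ↔
      ∃ e, C e ∧ adm i1 i2 e ∧ HasChain adm C (e :: rest) := by
  obtain ⟨r1, r2, rest', rfl⟩ : ∃ r1 r2 rest', rest = r1 :: r2 :: rest' := by
    match rest, hr with
    | r1 :: r2 :: rest', _ => exact ⟨r1, r2, rest', rfl⟩
  constructor
  · rintro ⟨es, hes⟩
    match es with
    | [] => exact ((show False from hes)).elim
    | e :: es' =>
      have hes' : ChainFrom adm C i1 (i2 :: r1 :: r2 :: rest') (e :: es') := hes
      rw [chainFrom_cons_cons] at hes'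
      exact ⟨e, hes'.1, hes'.2.1, es', hes'.2.2⟩
  · rintro ⟨e, hCe, hadm, es', hch⟩
    refine ⟨e :: es', ?_⟩
    show ChainFrom adm C i1 (i2 :: r1 :: r2 :: rest') (e :: es')
    rw [chainFrom_cons_cons]
    exact ⟨hCe, hadm, hch⟩

lemma main_lemma {p : ℕ} (hp : 6 ≤ p) (hpe : Even p) :
    ∀ (n : ℕ) (l : List ℕ), l.length = n → 3 ≤ n → (∀ x ∈ l, ColorEven p x) →
      (HasChain (AdmEven p) (ColorEven p) l ↔ Cond p l) := by
  intro n
  induction n using Nat.strong_induction_on with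
  | _ n IH =>
    intro l hlen h3 hcol
    rcases l with _ | ⟨i1, l⟩
    · simp at hlen; omega
    rcases l with _ | ⟨i2, rest⟩
    · simp at hlen; omega
    by_cases h4 : n = 3
    · subst h4
      have : rest.length = 1 := by
        simp only [List.length_cons] at hlen; omega
      obtain ⟨c, rfl⟩ : ∃ c, rest = [c] := by
        match rest, this with
        | [c], _ => exact ⟨c, rfl⟩
      exact hasChain_three.trans (cond_three hp).symm
    · have hrlen : 2 ≤ rest.length := by
        simp only [List.length_cons] at hlen; omega
      rw [hasChain_cons_cons hrlen]
      have hcol1 : ColorEven p i1 := hcol i1 (by simp)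
      have hcol2 : ColorEven p i2 := hcol i2 (by simp)
      have hcolr : ∀ x ∈ rest, ColorEven p x := fun x hx => hcol x (by simp [hx])
      constructor
      · rintro ⟨e, hCe, hadm, hch⟩
        have hcole : ∀ x ∈ (e :: rest), ColorEven p x := by
          intro x hx
          rcases List.mem_cons.mp hx with rfl | hx
          · exact hCe
          · exact hcolr x hx
        have := (IH (n - 1) (by omega) (e :: rest)
          (by simp only [List.length_cons] at hlen ⊢; omega) (by omega) hcole).mp hch
        exact cond_step_forward hadm this
      · intro hcond
        obtain ⟨e, hCe, hadm, hcond'⟩ :=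
          cond_step_backward hp hpe hcol1 hcol2 hcolr hcond
        have hcole : ∀ x ∈ (e :: rest), ColorEven p x := by
          intro x hx
          rcases List.mem_cons.mp hx with rfl | hx
          · exact hCe
          · exact hcolr x hx
        refine ⟨e, hCe, hadm, ?_⟩
        exact (IH (n - 1) (by omega) (e :: rest)
          (by simp only [List.length_cons] at hlen ⊢; omega) (by omega) hcole).mpr hcond'

end Stmt4Aux

theorem stmt4 (p : ℕ) (hp : 6 ≤ p) (heven : Even p) (m : ℕ) (hm : 3 ≤ m)
    (i : Fin m → ℕ) (hi : ∀ s, ColorEven p (i s)) (hne : ∃ s, i s ≠ 0) :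
    HasChain (AdmEven p) (ColorEven p) (List.ofFn i) ↔
      (Even (∑ t, i t) ∧
        ∀ (k : ℕ) (S : Finset (Fin m)), 2 * k + 1 ≤ m → S.card = 2 * k + 1 →
          2 * ∑ s ∈ S, (i s : ℤ) ≤ (k : ℤ) * ((p : ℤ) - 4) + ∑ t, (i t : ℤ)) := by
  classical
  have hlen : (List.ofFn i).length = m := by simp
  have hcol : ∀ x ∈ List.ofFn i, ColorEven p x := by
    intro x hx
    rw [List.mem_ofFn] at hx
    obtain ⟨s, rfl⟩ := hx
    exact hi s
  have hcoe : ((List.ofFn i : List ℕ) : Multiset ℕ) =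
      Multiset.map i (Finset.univ.val : Multiset (Fin m)) := by
    rw [List.ofFn_eq_map, Fin.univ_def]
    simp [Multiset.map_coe]
  have hsum : (List.ofFn i).sum = ∑ t, i t := List.sum_ofFn
  have hcast : ((p - 4 : ℕ) : ℤ) = (p : ℤ) - 4 := by
    have : (4:ℕ) ≤ p := by omega
    push_cast [this]
    ring
  have hsumS : ∀ S : Finset (Fin m), (∑ s ∈ S, (i s : ℤ)) = ((∑ s ∈ S, i s : ℕ) : ℤ) := by
    intro S; push_cast; ring
  have htot : (∑ t, (i t : ℤ)) = ((∑ t, i t : ℕ) : ℤ) := by push_cast; ring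
  rw [Stmt4Aux.main_lemma hp heven m (List.ofFn i) hlen hm hcol]
  constructor
  · rintro ⟨hev, hineq⟩
    rw [hsum] at hev
    refine ⟨hev, ?_⟩
    intro k S hk hS
    have hSle : S.val ≤ Finset.univ.val := Finset.val_le_iff.mpr (Finset.subset_univ S)
    have ht : Multiset.map i S.val ≤ ((List.ofFn i : List ℕ) : Multiset ℕ) := by
      rw [hcoe]; exact Multiset.map_le_map hSle
    have hcard : Multiset.card (Multiset.map i S.val) = 2 * k + 1 := by
      rw [Multiset.card_map]; exact hS
    have := hineq k (Multiset.map i S.val) ht hcard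
    rw [hsum] at this
    have hms : (Multiset.map i S.val).sum = ∑ s ∈ S, i s := rfl
    rw [hms] at this
    rw [hsumS, htot]
    calc (2 : ℤ) * ((∑ s ∈ S, i s : ℕ) : ℤ) = ((2 * ∑ s ∈ S, i s : ℕ) : ℤ) := by push_cast; ring
      _ ≤ ((k * (p - 4) + ∑ t, i t : ℕ) : ℤ) := by exact_mod_cast this
      _ = (k : ℤ) * ((p : ℤ) - 4) + ((∑ t, i t : ℕ) : ℤ) := by
          push_cast [hcast]
          ring
  · rintro ⟨hev, hineq⟩
    constructor
    · rw [hsum]; exact hev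
    · intro k t ht hcard
      rw [hcoe] at ht
      obtain ⟨u, hu, rfl⟩ := Stmt4Aux.exists_map_le ht
      have hnodup : u.Nodup := Multiset.nodup_of_le hu Finset.univ.nodup
      set S : Finset (Fin m) := ⟨u, hnodup⟩ with hSdef
      have hScard : S.card = 2 * k + 1 := by
        rw [show S.card = Multiset.card u from rfl, ← Multiset.card_map i u]
        exact hcard
      have hkm : 2 * k + 1 ≤ m := by
        have := Finset.card_le_univ S
        simp only [Finset.card_univ, Fintype.card_fin] at this
        omega
      have hZ := hineq k S hkm hScard
      have hms : (Multiset.map i u).sum = ∑ s ∈ S, i s := rfl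
      rw [hsumS, htot] at hZ
      rw [hms, hsum]
      have : ((2 * ∑ s ∈ S, i s : ℕ) : ℤ) ≤ ((k * (p - 4) + ∑ t, i t : ℕ) : ℤ) := by
        calc ((2 * ∑ s ∈ S, i s : ℕ) : ℤ) = 2 * ((∑ s ∈ S, i s : ℕ) : ℤ) := by push_cast; ring
          _ ≤ (k : ℤ) * ((p : ℤ) - 4) + ((∑ t, i t : ℕ) : ℤ) := hZ
          _ = ((k * (p - 4) + ∑ t, i t : ℕ) : ℤ) := by push_cast [hcast]; ring
      exact_mod_cast this
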